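/- Consider the subset X = P ∪ Q ∪ S ∪ T of ℝ², where P = [0,1]×[0,1], Q = [0,1]×[−1,0], S = [0,1]×[−2,−1], T = [−1,0]×[−2,−1], with the induced length metric. For a = (−1/2, −2), the distance function satisfies: d_a(w) = (√5)/2 + √(w₁² + (w₂+1)²) when w₁ ≥ 0 and w₂ ≥ 2w₁ − 1, and d_a(w) = √((w₁+1/2)² + (w₂+2)²) otherwise, for all w ∈ X. -/

import Mathlib

set_option maxHeartbeats 1000000

open scoped ENNReal
open Set

noncomputable section

abbrev E2 := EuclideanSpace ℝ (Fin 2)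

lemma coord_add_smul (x v : E2) (t : ℝ) (i : Fin 2) : (x + t • v) i = x i + t * v i := rfl

lemma dist_formula (x y : E2) : dist x y = Real.sqrt ((x 0 - y 0)^2 + (x 1 - y 1)^2) := by
  rw [EuclideanSpace.dist_eq]
  simp [Fin.sum_univ_two, Real.dist_eq, sq_abs]

lemma evar_line (x v : E2) {A B : ℝ} (h : A ≤ B) :
    eVariationOn (fun t : ℝ => x + t • v) (Set.Icc A B) ≤ ENNReal.ofReal ((B - A) * ‖v‖) := by
  have hlip : LipschitzWith ‖v‖₊ (fun t : ℝ => x + t • v) := by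
    apply LipschitzWith.of_dist_le_mul
    intro s t
    have : (x + s • v) - (x + t • v) = (s - t) • v := by module
    rw [dist_eq_norm, this, norm_smul, Real.dist_eq]
    simp [Real.norm_eq_abs, mul_comm]
  have hid : eVariationOn (id : ℝ → ℝ) (Set.Icc A B) ≤ ENNReal.ofReal (B - A) := by
    have hm : MonotoneOn (id : ℝ → ℝ) (Set.Icc A B) := fun _ _ _ _ h => h
    have := hm.eVariationOn_le (Set.left_mem_Icc.2 h) (Set.right_mem_Icc.2 h)
    simpa using this
  calc eVariationOn (fun t : ℝ => x + t • v) (Set.Icc A B)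
      = eVariationOn ((fun t : ℝ => x + t • v) ∘ id) (Set.Icc A B) := rfl
    _ ≤ ‖v‖₊ * eVariationOn (id : ℝ → ℝ) (Set.Icc A B) :=
        hlip.lipschitzOnWith.comp_eVariationOn_le (Set.mapsTo_univ _ _)
    _ ≤ ‖v‖₊ * ENNReal.ofReal (B - A) := by gcongr
    _ = ENNReal.ofReal ((B - A) * ‖v‖) := by
        rw [← enorm_eq_nnnorm, ← ofReal_norm, ← ENNReal.ofReal_mul (norm_nonneg _), mul_comm]

end

lemma sqrt5_pos : (0:ℝ) < Real.sqrt 5 := Real.sqrt_pos.2 (by norm_num)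
lemma sqrt5_sq : (Real.sqrt 5)^2 = 5 := Real.sq_sqrt (by norm_num)
lemma sqrt5_ge_two : (2:ℝ) ≤ Real.sqrt 5 := by
  nlinarith [sqrt5_sq, sqrt5_pos]

/-- bound for the second leg: `dist p a ≥ (2s+9/2)/√5`. -/
lemma legB (s : ℝ) (hs1 : s ≤ -1) (hs2 : (-2:ℝ) ≤ s) :
    (2*s + 9/2) / Real.sqrt 5 ≤ Real.sqrt (1/4 + (s+2)^2) := by
  rw [div_le_iff₀ sqrt5_pos]
  have h1 : Real.sqrt (1/4 + (s+2)^2) * Real.sqrt 5 = Real.sqrt ((1/4 + (s+2)^2) * 5) :=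
    (Real.sqrt_mul (by positivity) 5).symm
  rw [h1]
  have h2 : (0:ℝ) ≤ 2*s + 9/2 := by linarith
  rw [show (2*s + 9/2 : ℝ) = Real.sqrt ((2*s+9/2)^2) from (Real.sqrt_sq h2).symm]
  apply Real.sqrt_le_sqrt
  nlinarith [sq_nonneg (s+1)]

/-- The key geometric inequality: broken path through corner `(0,-1)` is optimal. -/
lemma key_ineq (w0 w1 s : ℝ) (h0 : 0 ≤ w0) (h1 : 2*w0 - 1 ≤ w1)
    (hs1 : s ≤ -1) (hs2 : (-2:ℝ) ≤ s) :
    Real.sqrt 5 / 2 + Real.sqrt (w0^2 + (w1+1)^2) ≤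
      Real.sqrt (w0^2 + (w1-s)^2) + Real.sqrt (1/4 + (s+2)^2) := by
  set R := Real.sqrt (w0^2 + (w1+1)^2) with hRdef
  have hRnn : 0 ≤ R := Real.sqrt_nonneg _
  have hRsq : R^2 = w0^2 + (w1+1)^2 := Real.sq_sqrt (by positivity)
  have hw1 : 2*w0 ≤ w1 + 1 := by linarith
  have hw1' : 0 ≤ w1 + 1 := by linarith
  have hB := legB s hs1 hs2
  set SB := Real.sqrt (1/4 + (s+2)^2) with hSBdef
  set SA := Real.sqrt (w0^2 + (w1-s)^2) with hSAdef
  have hSAnn : 0 ≤ SA := Real.sqrt_nonneg _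
  have hSBnn : 0 ≤ SB := Real.sqrt_nonneg _
  have h5 := sqrt5_pos
  have h5sq := sqrt5_sq
  rcases eq_or_lt_of_le hRnn with hR0 | hRpos
  · -- R = 0 : w0 = 0, w1 = -1
    have hsum : w0^2 + (w1+1)^2 = 0 := by rw [← hRsq, ← hR0]; ring
    have hw0 : w0 = 0 := by nlinarith [sq_nonneg w0, sq_nonneg (w1+1)]
    have hw1e : w1 = -1 := by nlinarith [sq_nonneg w0, sq_nonneg (w1+1)]
    rw [← hR0]
    have hSA' : SA = -1 - s := by
      rw [hSAdef, hw0, hw1e]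
      rw [show (0:ℝ)^2 + (-1 - s)^2 = (-1-s)^2 by ring]
      exact Real.sqrt_sq (by linarith)
    have hBle : (2*s + 9/2) / Real.sqrt 5 ≤ SB := hB
    have hdiv : (2*s + 9/2) / Real.sqrt 5 = (2*s+9/2) * (Real.sqrt 5) / 5 := by
      rw [div_eq_div_iff h5.ne' (by norm_num)]
      nlinarith
    have h52 := sqrt5_ge_two
    rw [hSA']
    nlinarith [mul_nonneg (by linarith : (0:ℝ) ≤ -1 - s) (by linarith : (0:ℝ) ≤ Real.sqrt 5 - 2)]
  · -- R > 0
    have hA' : w0^2 + (w1+1)*(w1-s) ≤ R * SA := by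
      have hdot : 0 ≤ w0^2 + (w1+1)*(w1-s) :=
        add_nonneg (sq_nonneg w0) (mul_nonneg hw1' (by linarith))
      have hprod : R * SA = Real.sqrt ((w0^2 + (w1+1)^2) * (w0^2 + (w1-s)^2)) := by
        rw [hRdef, hSAdef, ← Real.sqrt_mul (by positivity)]
      rw [hprod, show (w0^2 + (w1+1)*(w1-s) : ℝ) = Real.sqrt ((w0^2 + (w1+1)*(w1-s))^2) from
        (Real.sqrt_sq hdot).symm]
      apply Real.sqrt_le_sqrt
      nlinarith [sq_nonneg (w0 * ((w1+1) - (w1-s)))]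
    have hC : 2*R ≤ (w1+1) * Real.sqrt 5 := by
      have : (2*R)^2 ≤ ((w1+1) * Real.sqrt 5)^2 := by
        have hfac : 0 ≤ (w1+1-2*w0)*(w1+1+2*w0) :=
          mul_nonneg (by linarith) (by linarith)
        calc (2*R)^2 = 4*(w0^2+(w1+1)^2) := by rw [mul_pow, hRsq]; ring
          _ ≤ 5*(w1+1)^2 := by nlinarith
          _ = ((w1+1) * Real.sqrt 5)^2 := by rw [mul_pow, h5sq]; ring
      have hnn : 0 ≤ (w1+1) * Real.sqrt 5 := by positivity
      nlinarith
    have hB' : 2*s + 9/2 ≤ Real.sqrt 5 * SB := by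
      rw [div_le_iff₀ h5] at hB
      linarith [hB]
    -- combine: √5·A' + R·B' + (-1-s)·C
    have t1 : Real.sqrt 5 * (w0^2 + (w1+1)*(w1-s)) ≤ Real.sqrt 5 * (R * SA) :=
      mul_le_mul_of_nonneg_left hA' h5.le
    have t2 : R * (2*s + 9/2) ≤ R * (Real.sqrt 5 * SB) :=
      mul_le_mul_of_nonneg_left hB' hRpos.le
    have t3 : (-1-s) * (2*R) ≤ (-1-s) * ((w1+1) * Real.sqrt 5) :=
      mul_le_mul_of_nonneg_left hC (by linarith)
    -- then √5 R (SA + SB - √5/2 - R) ≥ 0, divide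
    have hmain : 0 ≤ Real.sqrt 5 * R * (SA + SB - Real.sqrt 5/2 - R) := by nlinarith
    have hpos : 0 < Real.sqrt 5 * R := by positivity
    nlinarith [hmain, hpos]

open scoped ENNReal
open Set

noncomputable section

def Xset : Set (EuclideanSpace ℝ (Fin 2)) :=
      {w | w 0 ∈ Set.Icc (0:ℝ) 1 ∧ w 1 ∈ Set.Icc (0:ℝ) 1} ∪
      {w | w 0 ∈ Set.Icc (0:ℝ) 1 ∧ w 1 ∈ Set.Icc (-1:ℝ) 0} ∪
      {w | w 0 ∈ Set.Icc (0:ℝ) 1 ∧ w 1 ∈ Set.Icc (-2:ℝ) (-1)} ∪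
      {w | w 0 ∈ Set.Icc (-1:ℝ) 0 ∧ w 1 ∈ Set.Icc (-2:ℝ) (-1)}

def apt : EuclideanSpace ℝ (Fin 2) := WithLp.toLp 2 (fun i : Fin 2 => if i = 0 then (-(1/2) : ℝ) else -2)
def cpt : EuclideanSpace ℝ (Fin 2) := WithLp.toLp 2 (fun i : Fin 2 => if i = 0 then (0 : ℝ) else -1)

lemma apt0 : apt 0 = -(1/2) := rfl
lemma apt1 : apt 1 = -2 := rfl
lemma cpt0 : cpt 0 = 0 := rfl
lemma cpt1 : cpt 1 = -1 := rfl

lemma mem_Xset_iff (p : EuclideanSpace ℝ (Fin 2)) : p ∈ Xset ↔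
    (0 ≤ p 0 ∧ p 0 ≤ 1 ∧ -2 ≤ p 1 ∧ p 1 ≤ 1) ∨
    (-1 ≤ p 0 ∧ p 0 ≤ 0 ∧ -2 ≤ p 1 ∧ p 1 ≤ -1) := by
  simp only [Xset, Set.mem_union, Set.mem_setOf_eq, Set.mem_Icc]
  constructor
  · rintro (((⟨⟨a1,a2⟩,b1,b2⟩|⟨⟨a1,a2⟩,b1,b2⟩)|⟨⟨a1,a2⟩,b1,b2⟩)|⟨⟨a1,a2⟩,b1,b2⟩)
    · exact Or.inl ⟨a1, a2, by linarith, by linarith⟩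
    · exact Or.inl ⟨a1, a2, by linarith, by linarith⟩
    · exact Or.inl ⟨a1, a2, b1, by linarith⟩
    · exact Or.inr ⟨a1, a2, b1, b2⟩
  · rintro (⟨a1,a2,b1,b2⟩|⟨a1,a2,b1,b2⟩)
    · rcases le_or_gt (p 1) (-1) with h|h
      · exact Or.inl (Or.inr ⟨⟨a1,a2⟩,b1,h⟩)
      · rcases le_or_gt (p 1) 0 with h2|h2
        · exact Or.inl (Or.inl (Or.inr ⟨⟨a1,a2⟩, by linarith, h2⟩))
        · exact Or.inl (Or.inl (Or.inl ⟨⟨a1,a2⟩, by linarith, b2⟩))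
    · exact Or.inr ⟨⟨a1,a2⟩,b1,b2⟩

end


open scoped ENNReal
open Set

/-- Intrinsic (shortest-path) distance inside a subset `X` of a Euclidean space,
as the infimum of lengths (total variations) of continuous paths in `X`. -/
noncomputable def pathDist {E : Type*} [NormedAddCommGroup E] [InnerProductSpace ℝ E]
    (X : Set E) (x y : E) : ℝ≥0∞ :=
  ⨅ (γ : ℝ → E) (_ : ContinuousOn γ (Set.Icc 0 1)) (_ : γ 0 = x) (_ : γ 1 = y)
    (_ : ∀ t ∈ Set.Icc (0:ℝ) 1, γ t ∈ X), eVariationOn γ (Set.Icc 0 1)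


theorem stmt_14 :
    let X : Set (EuclideanSpace ℝ (Fin 2)) :=
      {w | w 0 ∈ Set.Icc (0:ℝ) 1 ∧ w 1 ∈ Set.Icc (0:ℝ) 1} ∪
      {w | w 0 ∈ Set.Icc (0:ℝ) 1 ∧ w 1 ∈ Set.Icc (-1:ℝ) 0} ∪
      {w | w 0 ∈ Set.Icc (0:ℝ) 1 ∧ w 1 ∈ Set.Icc (-2:ℝ) (-1)} ∪
      {w | w 0 ∈ Set.Icc (-1:ℝ) 0 ∧ w 1 ∈ Set.Icc (-2:ℝ) (-1)}
    let a : EuclideanSpace ℝ (Fin 2) := WithLp.toLp 2 (fun i : Fin 2 => if i = 0 then (-(1/2) : ℝ) else -2)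
    ∀ w ∈ X,
      ((0 ≤ w 0 ∧ 2 * w 0 - 1 ≤ w 1) →
        pathDist X w a =
          ENNReal.ofReal (Real.sqrt 5 / 2 + Real.sqrt ((w 0) ^ 2 + (w 1 + 1) ^ 2))) ∧
      (¬(0 ≤ w 0 ∧ 2 * w 0 - 1 ≤ w 1) →
        pathDist X w a =
          ENNReal.ofReal (Real.sqrt ((w 0 + 1/2) ^ 2 + (w 1 + 2) ^ 2))) := by
  intro X a w hw
  have hX : X = Xset := rfl
  have haX : a = apt := rfl
  rw [hX] at hw ⊢
  rw [haX]
  have hw' := (mem_Xset_iff w).1 hw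
  constructor
  · rintro ⟨hw0, hw01⟩
    -- bounds on w
    have hwb : w 0 ≤ 1 ∧ -2 ≤ w 1 ∧ w 1 ≤ 1 := by
      rcases hw' with ⟨h1,h2,h3,h4⟩|⟨h1,h2,h3,h4⟩ <;> exact ⟨by linarith, by linarith, by linarith⟩
    obtain ⟨hwb1, hwb2, hwb3⟩ := hwb
    apply le_antisymm
    · -- upper1
      set v1 : EuclideanSpace ℝ (Fin 2) := (2:ℝ) • (cpt - w) with hv1
      set v2 : EuclideanSpace ℝ (Fin 2) := (2:ℝ) • (apt - cpt) with hv2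
      set x2 : EuclideanSpace ℝ (Fin 2) := cpt - (apt - cpt) with hx2
      set γ : ℝ → EuclideanSpace ℝ (Fin 2) :=
        fun t => if t ≤ 1/2 then w + (2*t) • (cpt - w) else cpt + (2*t - 1) • (apt - cpt) with hγ
      have hγcont : ContinuousOn γ (Set.Icc 0 1) := by
        apply Continuous.continuousOn
        apply Continuous.if_le
        · exact continuous_const.add ((continuous_const.mul continuous_id).smul continuous_const)
        · exact continuous_const.add
            (((continuous_const.mul continuous_id).sub continuous_const).smul continuous_const)
        · exact continuous_id
        · exact continuous_const
        · intro t ht; rw [ht]; module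
      have hγ0 : γ 0 = w := by
        rw [hγ]; norm_num
      have hγ1 : γ 1 = apt := by
        rw [hγ]; norm_num
      have hmem : ∀ t ∈ Set.Icc (0:ℝ) 1, γ t ∈ Xset := by
        intro t ht
        obtain ⟨ht0, ht1⟩ := ht
        by_cases hc : t ≤ 1/2
        · have hval : γ t = w + (2*t) • (cpt - w) := by rw [hγ]; exact if_pos hc
          rw [mem_Xset_iff, hval]
          left
          have e0 : (w + (2*t) • (cpt - w)) 0 = w 0 + (2*t) * (0 - w 0) := rfl
          have e1 : (w + (2*t) • (cpt - w)) 1 = w 1 + (2*t) * (-1 - w 1) := rfl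
          rw [e0, e1]
          refine ⟨?_, ?_, ?_, ?_⟩
          · nlinarith [mul_nonneg (by linarith : (0:ℝ) ≤ 1 - 2*t) hw0]
          · nlinarith [mul_nonneg ht0 hw0]
          · nlinarith [mul_nonneg (by linarith : (0:ℝ) ≤ 1 - 2*t)
              (by linarith : (0:ℝ) ≤ w 1 + 2)]
          · nlinarith [mul_nonneg (by linarith : (0:ℝ) ≤ 1 - 2*t)
              (by linarith : (0:ℝ) ≤ 1 - w 1)]
        · have hval : γ t = cpt + (2*t - 1) • (apt - cpt) := by rw [hγ]; exact if_neg hc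
          rw [mem_Xset_iff, hval]
          push_neg at hc
          right
          have e0 : (cpt + (2*t - 1) • (apt - cpt)) 0 = 0 + (2*t - 1) * (-(1/2) - 0) := rfl
          have e1 : (cpt + (2*t - 1) • (apt - cpt)) 1 = -1 + (2*t - 1) * (-2 - (-1)) := rfl
          rw [e0, e1]
          refine ⟨by linarith, by linarith, by linarith, by linarith⟩
      have hsplit := eVariationOn.Icc_add_Icc γ (by norm_num : (0:ℝ) ≤ 1/2)
        (by norm_num : (1:ℝ)/2 ≤ 1) (by norm_num : (1:ℝ)/2 ∈ Set.Icc (0:ℝ) 1)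
      rw [Set.inter_self] at hsplit
      have hI1 : Set.Icc (0:ℝ) 1 ∩ Set.Icc 0 (1/2) = Set.Icc (0:ℝ) (1/2) := by
        rw [Set.Icc_inter_Icc]; norm_num
      have hI2 : Set.Icc (0:ℝ) 1 ∩ Set.Icc (1/2) 1 = Set.Icc (1/2:ℝ) 1 := by
        rw [Set.Icc_inter_Icc]; norm_num
      have he1 : eVariationOn γ (Set.Icc 0 (1/2)) =
          eVariationOn (fun t : ℝ => w + t • v1) (Set.Icc 0 (1/2)) := by
        apply eVariationOn.eq_of_eqOn
        intro t ht
        simp only [hγ, hv1, if_pos ht.2]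
        module
      have he2 : eVariationOn γ (Set.Icc (1/2) 1) =
          eVariationOn (fun t : ℝ => x2 + t • v2) (Set.Icc (1/2) 1) := by
        apply eVariationOn.eq_of_eqOn
        intro t ht
        by_cases hc : t ≤ 1/2
        · have htt : t = 1/2 := le_antisymm hc ht.1
          subst htt
          simp only [hγ, hx2, hv2, if_pos le_rfl]
          module
        · simp only [hγ, hx2, hv2, if_neg hc]
          module
      have hb1 : eVariationOn (fun t : ℝ => w + t • v1) (Set.Icc 0 (1/2)) ≤
          ENNReal.ofReal (dist cpt w) := by
        refine le_trans (evar_line w v1 (by norm_num)) (le_of_eq ?_)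
        congr 1
        rw [hv1, norm_smul, ← dist_eq_norm, Real.norm_ofNat]
        ring
      have hb2 : eVariationOn (fun t : ℝ => x2 + t • v2) (Set.Icc (1/2) 1) ≤
          ENNReal.ofReal (dist apt cpt) := by
        refine le_trans (evar_line x2 v2 (by norm_num)) (le_of_eq ?_)
        congr 1
        rw [hv2, norm_smul, ← dist_eq_norm, Real.norm_ofNat]
        ring
      have hd1 : dist cpt w = Real.sqrt (w 0^2 + (w 1+1)^2) := by
        rw [dist_formula, cpt0, cpt1,
          show ((0:ℝ) - w 0)^2 + ((-1:ℝ) - w 1)^2 = w 0^2 + (w 1+1)^2 by ring]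
      have hd2 : dist apt cpt = Real.sqrt 5 / 2 := by
        rw [dist_formula, apt0, apt1, cpt0, cpt1,
          show ((-(1/2):ℝ) - 0)^2 + ((-2:ℝ) - (-1))^2 = 5/4 by norm_num,
          show (5/4:ℝ) = (Real.sqrt 5 / 2)^2 by
            rw [div_pow, Real.sq_sqrt] <;> norm_num]
        exact Real.sqrt_sq (by positivity)
      calc pathDist Xset w apt ≤ eVariationOn γ (Set.Icc 0 1) :=
            iInf_le_of_le γ <| iInf_le_of_le hγcont <| iInf_le_of_le hγ0 <|
              iInf_le_of_le hγ1 <| iInf_le _ hmem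
        _ = eVariationOn γ (Set.Icc 0 (1/2)) + eVariationOn γ (Set.Icc (1/2) 1) := by
            rw [← hsplit, hI1, hI2]
        _ ≤ ENNReal.ofReal (dist cpt w) + ENNReal.ofReal (dist apt cpt) :=
            add_le_add (he1 ▸ hb1) (he2 ▸ hb2)
        _ = ENNReal.ofReal (dist cpt w + dist apt cpt) :=
            (ENNReal.ofReal_add dist_nonneg dist_nonneg).symm
        _ = ENNReal.ofReal (Real.sqrt 5 / 2 + Real.sqrt ((w 0)^2 + (w 1 + 1)^2)) := by
            rw [hd1, hd2, add_comm]
    · -- lower1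
      refine le_iInf fun γ => le_iInf fun hcont => le_iInf fun h0 => le_iInf fun h1 =>
        le_iInf fun hmem => ?_
      set S0 : Set ℝ := Set.Icc 0 1 ∩ (fun t => γ t 0) ⁻¹' Set.Ici 0 with hS0
      have hg0 : ContinuousOn (fun t => γ t 0) (Set.Icc (0:ℝ) 1) :=
        (EuclideanSpace.proj (𝕜 := ℝ) (0 : Fin 2)).continuous.comp_continuousOn hcont
      have hS0closed : IsClosed S0 :=
        hg0.preimage_isClosed_of_isClosed isClosed_Icc isClosed_Ici
      have h0mem : (0:ℝ) ∈ S0 :=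
        ⟨⟨le_rfl, by norm_num⟩, by simp only [Set.mem_preimage, Set.mem_Ici, h0]; exact hw0⟩
      have hbdd : BddAbove S0 := ⟨1, fun t ht => ht.1.2⟩
      set τ := sSup S0 with hτ
      have hτS : τ ∈ S0 := hS0closed.csSup_mem ⟨0, h0mem⟩ hbdd
      have hτ0 : 0 ≤ τ := hτS.1.1
      have hτ1 : τ ≤ 1 := hτS.1.2
      have hτa : 0 ≤ γ τ 0 := hτS.2
      have hτlt : τ < 1 := by
        rcases lt_or_eq_of_le hτ1 with h|h
        · exact h
        · exfalso; rw [h, h1, apt0] at hτa; norm_num at hτa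
      have hafter : ∀ t ∈ Set.Ioc τ 1, γ t 0 ≤ 0 ∧ -2 ≤ γ t 1 ∧ γ t 1 ≤ -1 := by
        intro t ht
        have htI : t ∈ Set.Icc (0:ℝ) 1 := ⟨le_trans hτ0 ht.1.le, ht.2⟩
        have hneg : ¬ (0 ≤ γ t 0) := by
          intro hpos
          exact absurd (le_csSup hbdd ⟨htI, hpos⟩) (not_le.2 ht.1)
        rcases (mem_Xset_iff _).1 (hmem t htI) with ⟨h1',_⟩|⟨_,h2',h3',h4'⟩
        · exact absurd h1' hneg
        · exact ⟨h2', h3', h4'⟩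
      haveI hFne : (nhdsWithin τ (Set.Ioc τ 1)).NeBot := by
        rw [← mem_closure_iff_nhdsWithin_neBot, closure_Ioc hτlt.ne]
        exact ⟨le_rfl, hτlt.le⟩
      have htend : Filter.Tendsto γ (nhdsWithin τ (Set.Ioc τ 1)) (nhds (γ τ)) :=
        (hcont τ ⟨hτ0, hτ1⟩).mono (fun t ht => ⟨le_trans hτ0 ht.1.le, ht.2⟩)
      have htd0 : Filter.Tendsto (fun t => γ t 0) (nhdsWithin τ (Set.Ioc τ 1)) (nhds (γ τ 0)) :=
        ((EuclideanSpace.proj (𝕜 := ℝ) (0 : Fin 2)).continuous.tendsto _).comp htend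
      have htd1 : Filter.Tendsto (fun t => γ t 1) (nhdsWithin τ (Set.Ioc τ 1)) (nhds (γ τ 1)) :=
        ((EuclideanSpace.proj (𝕜 := ℝ) (1 : Fin 2)).continuous.tendsto _).comp htend
      have hb0 : γ τ 0 ≤ 0 :=
        le_of_tendsto htd0 (eventually_nhdsWithin_of_forall fun t ht => (hafter t ht).1)
      have hb1a : -2 ≤ γ τ 1 :=
        ge_of_tendsto htd1 (eventually_nhdsWithin_of_forall fun t ht => (hafter t ht).2.1)
      have hb1b : γ τ 1 ≤ -1 :=
        le_of_tendsto htd1 (eventually_nhdsWithin_of_forall fun t ht => (hafter t ht).2.2)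
      have hp0 : γ τ 0 = 0 := le_antisymm hb0 hτa
      have hsplit := eVariationOn.Icc_add_Icc γ hτ0 hτlt.le (Set.mem_Icc.2 ⟨hτ0, hτ1⟩)
      rw [Set.inter_self] at hsplit
      have hd1 : edist (γ 0) (γ τ) ≤ eVariationOn γ (Set.Icc 0 1 ∩ Set.Icc 0 τ) :=
        eVariationOn.edist_le γ ⟨⟨le_rfl, by norm_num⟩, ⟨le_rfl, hτ0⟩⟩
          ⟨⟨hτ0, hτ1⟩, ⟨hτ0, le_rfl⟩⟩
      have hd2 : edist (γ τ) (γ 1) ≤ eVariationOn γ (Set.Icc 0 1 ∩ Set.Icc τ 1) :=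
        eVariationOn.edist_le γ ⟨⟨hτ0, hτ1⟩, ⟨le_rfl, hτlt.le⟩⟩
          ⟨⟨by norm_num, le_rfl⟩, ⟨hτlt.le, le_rfl⟩⟩
      have hsum : edist (γ 0) (γ τ) + edist (γ τ) (γ 1) ≤ eVariationOn γ (Set.Icc 0 1) := by
        rw [← hsplit]; exact add_le_add hd1 hd2
      rw [h0, h1] at hsum
      refine le_trans ?_ hsum
      rw [edist_dist, edist_dist, ← ENNReal.ofReal_add dist_nonneg dist_nonneg]
      apply ENNReal.ofReal_le_ofReal
      rw [dist_formula w (γ τ), dist_formula (γ τ) apt, hp0, apt0, apt1,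
        show (w 0 - 0)^2 + (w 1 - γ τ 1)^2 = w 0^2 + (w 1 - γ τ 1)^2 by ring,
        show ((0:ℝ) - -(1/2))^2 + (γ τ 1 - -2)^2 = 1/4 + (γ τ 1 + 2)^2 by ring]
      exact key_ineq (w 0) (w 1) (γ τ 1) hw0 hw01 hb1b hb1a
  · intro hcond
    apply le_antisymm
    · -- upper2
      push_neg at hcond
      set v : EuclideanSpace ℝ (Fin 2) := apt - w with hv
      set γ : ℝ → EuclideanSpace ℝ (Fin 2) := fun t => w + t • v with hγ
      have hγcont : ContinuousOn γ (Set.Icc 0 1) :=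
        (continuous_const.add (continuous_id.smul continuous_const)).continuousOn
      have hγ0 : γ 0 = w := by simp [hγ]
      have hγ1 : γ 1 = apt := by simp [hγ, hv]
      have hc0 : ∀ t : ℝ, γ t 0 = w 0 + t * (-(1/2) - w 0) := by
        intro t; rw [hγ]; rfl
      have hc1 : ∀ t : ℝ, γ t 1 = w 1 + t * (-2 - w 1) := by
        intro t; rw [hγ]; rfl
      have hmem : ∀ t ∈ Set.Icc (0:ℝ) 1, γ t ∈ Xset := by
        intro t ht
        obtain ⟨ht0, ht1⟩ := ht
        have h1t : (0:ℝ) ≤ 1 - t := by linarith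
        rw [mem_Xset_iff, hc0, hc1]
        rcases lt_or_ge (w 0) 0 with hneg | hpos
        · obtain ⟨h1,h2,h3,h4⟩ : -1 ≤ w 0 ∧ w 0 ≤ 0 ∧ -2 ≤ w 1 ∧ w 1 ≤ -1 := by
            rcases hw' with ⟨h1,_⟩|h
            · linarith
            · exact h
          refine Or.inr ⟨?_, ?_, ?_, ?_⟩
          · nlinarith [mul_nonneg h1t (by linarith : (0:ℝ) ≤ w 0 + 1)]
          · nlinarith [mul_nonneg h1t (by linarith : (0:ℝ) ≤ -(w 0))]
          · nlinarith [mul_nonneg h1t (by linarith : (0:ℝ) ≤ w 1 + 2)]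
          · nlinarith [mul_nonneg h1t (by linarith : (0:ℝ) ≤ -(w 1 + 1))]
        · have hlt : w 1 < 2 * w 0 - 1 := hcond hpos
          have hwb : w 0 ≤ 1 ∧ -2 ≤ w 1 ∧ w 1 ≤ 1 := by
            rcases hw' with ⟨h1,h2,h3,h4⟩|⟨h1,h2,h3,h4⟩ <;>
              exact ⟨by linarith, by linarith, by linarith⟩
          obtain ⟨hb1, hb2, hb3⟩ := hwb
          rcases le_or_gt 0 (w 0 + t * (-(1/2) - w 0)) with hx | hx
          · refine Or.inl ⟨hx, ?_, ?_, ?_⟩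
            · nlinarith [mul_nonneg ht0 hpos]
            · nlinarith [mul_nonneg h1t (by linarith : (0:ℝ) ≤ w 1 + 2)]
            · nlinarith [mul_nonneg h1t (by linarith : (0:ℝ) ≤ 1 - w 1)]
          · refine Or.inr ⟨?_, le_of_lt hx, ?_, ?_⟩
            · nlinarith [mul_nonneg h1t hpos]
            · nlinarith [mul_nonneg h1t (by linarith : (0:ℝ) ≤ w 1 + 2)]
            · nlinarith [mul_nonneg h1t (by linarith : (0:ℝ) ≤ 2 * w 0 - (w 1 + 1)), hx]
      have hev : eVariationOn γ (Set.Icc 0 1) ≤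
          ENNReal.ofReal (Real.sqrt ((w 0 + 1/2)^2 + (w 1 + 2)^2)) := by
        refine le_trans (evar_line w v (by norm_num)) (le_of_eq ?_)
        congr 1
        rw [hv, ← dist_eq_norm, dist_formula, apt0, apt1,
          show ((-(1/2):ℝ) - w 0)^2 + ((-2:ℝ) - w 1)^2 = (w 0 + 1/2)^2 + (w 1 + 2)^2 by ring]
        norm_num
      calc pathDist Xset w apt ≤ eVariationOn γ (Set.Icc 0 1) :=
            iInf_le_of_le γ <| iInf_le_of_le hγcont <| iInf_le_of_le hγ0 <|
              iInf_le_of_le hγ1 <| iInf_le _ hmem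
        _ ≤ _ := hev
    · -- lower2 : evar ≥ edist of endpoints
      refine le_iInf fun γ => le_iInf fun hcont => le_iInf fun h0 => le_iInf fun h1 =>
        le_iInf fun hmem => ?_
      have hd : edist (γ 0) (γ 1) ≤ eVariationOn γ (Set.Icc 0 1) :=
        eVariationOn.edist_le γ (by norm_num : (0:ℝ) ∈ Set.Icc (0:ℝ) 1)
          (by norm_num : (1:ℝ) ∈ Set.Icc (0:ℝ) 1)
      rw [h0, h1, edist_dist] at hd
      refine le_trans (le_of_eq ?_) hd
      congr 1
      rw [dist_formula, apt0, apt1]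
      congr 1
      ring
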